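/- Let T and T′ be triangulated categories, F : T → T′ a triangulated (exact) functor, and U an object of T. If for every n ∈ ℤ the map F : Hom_T(U, U[n]) → Hom_{T′}(FU, FU[n]) is bijective, then F is fully faithful on thick(U): for all objects X, Y of the smallest full triangulated subcategory of T containing U and closed under isomorphisms and direct summands, the map F : Hom_T(X, Y) → Hom_{T′}(FX, FY) is bijective. -/

import Mathlib

open CategoryTheory CategoryTheory.Limits CategoryTheory.Pretriangulated

universe v v' u u'

set_option linter.unusedSectionVars false
section Aux

variable {C : Type u} [Category.{v} C] [HasShift C ℤ] [Preadditive C]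
  [HasZeroObject C] [∀ n : ℤ, (shiftFunctor C n).Additive] [Pretriangulated C]
  {D : Type u'} [Category.{v'} D] [HasShift D ℤ] [Preadditive D]
  [HasZeroObject D] [∀ n : ℤ, (shiftFunctor D n).Additive] [Pretriangulated D]
  (F : C ⥤ D) [F.CommShift ℤ] [F.IsTriangulated]

/-- `F` is bijective on `Hom(X, Y)`. -/
def GoodPair (X Y : C) : Prop := Function.Bijective (fun φ : X ⟶ Y => F.map φ)

lemma goodPair_iso_left {X X' Y : C} (e : X ≅ X') (h : GoodPair F X Y) : GoodPair F X' Y := by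
  constructor
  · intro φ φ' hφ
    replace hφ : F.map φ = F.map φ' := hφ
    have h2 : F.map (e.hom ≫ φ) = F.map (e.hom ≫ φ') := by rw [F.map_comp, F.map_comp, hφ]
    have h3 := h.1 h2
    rwa [cancel_epi] at h3
  · intro g
    obtain ⟨φ, hφ⟩ := h.2 (F.map e.hom ≫ g)
    dsimp at hφ
    refine ⟨e.inv ≫ φ, ?_⟩
    dsimp
    rw [F.map_comp, hφ, ← Category.assoc, ← F.map_comp, e.inv_hom_id, F.map_id, Category.id_comp]

lemma goodPair_iso_right {X Y Y' : C} (e : Y ≅ Y') (h : GoodPair F X Y) : GoodPair F X Y' := by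
  constructor
  · intro φ φ' hφ
    replace hφ : F.map φ = F.map φ' := hφ
    have h2 : F.map (φ ≫ e.inv) = F.map (φ' ≫ e.inv) := by rw [F.map_comp, F.map_comp, hφ]
    have h3 := h.1 h2
    rwa [cancel_mono] at h3
  · intro g
    obtain ⟨φ, hφ⟩ := h.2 (g ≫ F.map e.inv)
    dsimp at hφ
    refine ⟨φ ≫ e.hom, ?_⟩
    dsimp
    rw [F.map_comp, hφ, Category.assoc, ← F.map_comp, e.inv_hom_id, F.map_id, Category.comp_id]

lemma goodPair_summand_left {X X' Y : C} (h : GoodPair F (X ⊞ X') Y) : GoodPair F X Y := by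
  constructor
  · intro φ φ' hφ
    replace hφ : F.map φ = F.map φ' := hφ
    have h2 : F.map (biprod.fst ≫ φ) = F.map ((biprod.fst : X ⊞ X' ⟶ X) ≫ φ') := by
      rw [F.map_comp, F.map_comp, hφ]
    have h3 := h.1 h2
    have := congrArg (fun t => (biprod.inl : X ⟶ X ⊞ X') ≫ t) h3
    simpa using this
  · intro g
    obtain ⟨χ, hχ⟩ := h.2 (F.map (biprod.fst : X ⊞ X' ⟶ X) ≫ g)
    dsimp at hχ
    refine ⟨biprod.inl ≫ χ, ?_⟩
    dsimp
    rw [F.map_comp, hχ, ← Category.assoc, ← F.map_comp, biprod.inl_fst, F.map_id,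
      Category.id_comp]

lemma goodPair_summand_right {Y X X' : C} (h : GoodPair F Y (X ⊞ X')) : GoodPair F Y X := by
  constructor
  · intro φ φ' hφ
    replace hφ : F.map φ = F.map φ' := hφ
    have h2 : F.map (φ ≫ biprod.inl) = F.map (φ' ≫ (biprod.inl : X ⟶ X ⊞ X')) := by
      rw [F.map_comp, F.map_comp, hφ]
    have h3 := h.1 h2
    have := congrArg (fun t => t ≫ (biprod.fst : X ⊞ X' ⟶ X)) h3
    simpa using this
  · intro g
    obtain ⟨χ, hχ⟩ := h.2 (g ≫ F.map (biprod.inl : X ⟶ X ⊞ X'))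
    dsimp at hχ
    refine ⟨χ ≫ biprod.fst, ?_⟩
    dsimp
    rw [F.map_comp, hχ, Category.assoc, ← F.map_comp, biprod.inl_fst, F.map_id,
      Category.comp_id]

lemma goodPair_shift {X Y : C} (n : ℤ) (h : GoodPair F X Y) :
    GoodPair F (X⟦n⟧) (Y⟦n⟧) := by
  have nat : ∀ (φ : X ⟶ Y), F.map (φ⟦n⟧') =
      (F.commShiftIso n).hom.app X ≫ (F.map φ)⟦n⟧' ≫ (F.commShiftIso n).inv.app Y := by
    intro φ
    have h1 := (F.commShiftIso n).hom.naturality φ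
    dsimp at h1
    rw [← Category.assoc, ← h1, Category.assoc]
    simp
  constructor
  · intro ψ ψ' hψ
    dsimp at hψ
    obtain ⟨φ, rfl⟩ := (shiftFunctor C n).map_surjective ψ
    obtain ⟨φ', rfl⟩ := (shiftFunctor C n).map_surjective ψ'
    rw [nat, nat, cancel_epi, cancel_mono] at hψ
    have := (shiftFunctor D n).map_injective hψ
    rw [h.1 this]
  · intro g
    obtain ⟨h', hh'⟩ := (shiftFunctor D n).map_surjective
      ((F.commShiftIso n).inv.app X ≫ g ≫ (F.commShiftIso n).hom.app Y)
    obtain ⟨φ, hφ⟩ := h.2 h'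
    dsimp at hφ
    refine ⟨φ⟦n⟧', ?_⟩
    dsimp
    rw [nat, hφ, hh']
    simp

lemma goodPair_five_snd (T : Triangle C) (hT : T ∈ distTriang C) (X : C)
    (h₁ : GoodPair F X T.obj₁) (h₂ : GoodPair F X T.obj₂)
    (h₁' : GoodPair F X (T.obj₁⟦(1:ℤ)⟧)) (h₂' : GoodPair F X (T.obj₂⟦(1:ℤ)⟧)) :
    GoodPair F X T.obj₃ := by
  have hFT := F.map_distinguished T hT
  have key : F.map T.mor₃ ≫ F.map ((T.mor₁)⟦(1:ℤ)⟧') = 0 := by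
    have nat := (F.commShiftIso (1:ℤ)).hom.naturality T.mor₁
    dsimp at nat
    have z : (F.map T.mor₃ ≫ (F.commShiftIso (1:ℤ)).hom.app T.obj₁) ≫ (F.map T.mor₁)⟦(1:ℤ)⟧' = 0 :=
      comp_distTriang_mor_zero₃₁ _ hFT
    rw [← cancel_mono ((F.commShiftIso (1:ℤ)).hom.app T.obj₂), Category.assoc, nat, zero_comp]
    simpa using z
  have inj : ∀ φ : X ⟶ T.obj₃, F.map φ = 0 → φ = 0 := by
    intro φ hφ
    have h3 : φ ≫ T.mor₃ = 0 := by
      apply h₁'.1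
      dsimp
      rw [F.map_comp, hφ, zero_comp, F.map_zero]
    obtain ⟨ψ, rfl⟩ := Triangle.coyoneda_exact₃ T hT φ h3
    have h4 : F.map ψ ≫ F.map T.mor₂ = 0 := by
      rw [← F.map_comp, hφ]
    obtain ⟨h', hh'⟩ : ∃ h' : F.obj X ⟶ F.obj T.obj₁, F.map ψ = h' ≫ F.map T.mor₁ :=
      Triangle.coyoneda_exact₂ _ hFT (F.map ψ) h4
    obtain ⟨ρ, hρ⟩ := h₁.2 h'
    dsimp at hρ
    have h5 : ψ = ρ ≫ T.mor₁ := by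
      apply h₂.1
      dsimp
      rw [F.map_comp, hρ, ← hh']
    rw [h5, Category.assoc, comp_distTriang_mor_zero₁₂ T hT, comp_zero]
  constructor
  · intro φ φ' hφ
    dsimp at hφ
    have := inj (φ - φ') (by rw [F.map_sub, hφ, sub_self])
    rwa [sub_eq_zero] at this
  · intro g
    obtain ⟨α, hα⟩ := h₁'.2 (g ≫ F.map T.mor₃)
    dsimp at hα
    have hα2 : α ≫ T.mor₁⟦(1:ℤ)⟧' = 0 := by
      apply h₂'.1
      dsimp
      rw [F.map_comp, hα, F.map_zero, Category.assoc, key, comp_zero]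
    obtain ⟨β, hβ⟩ := Triangle.coyoneda_exact₁ T hT α hα2
    have hg : (g - F.map β) ≫ F.map T.mor₃ = 0 := by
      rw [Preadditive.sub_comp, ← F.map_comp, ← hβ, hα, sub_self]
    have hg' : (g - F.map β) ≫ F.map T.mor₃ ≫ (F.commShiftIso (1:ℤ)).hom.app T.obj₁ = 0 := by
      rw [← Category.assoc, hg, zero_comp]
    obtain ⟨h', hh'⟩ : ∃ h' : F.obj X ⟶ F.obj T.obj₂, g - F.map β = h' ≫ F.map T.mor₂ :=
      Triangle.coyoneda_exact₃ _ hFT (g - F.map β) hg'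
    obtain ⟨γ, hγ⟩ := h₂.2 h'
    dsimp at hγ
    refine ⟨β + γ ≫ T.mor₂, ?_⟩
    dsimp
    rw [F.map_add, F.map_comp, hγ, ← hh']
    abel

lemma goodPair_five_fst (T : Triangle C) (hT : T ∈ distTriang C) (Y : C)
    (h₁ : GoodPair F T.obj₁ Y) (h₂ : GoodPair F T.obj₂ Y)
    (h₁' : GoodPair F (T.obj₁⟦(1:ℤ)⟧) Y) (h₂' : GoodPair F (T.obj₂⟦(1:ℤ)⟧) Y) :
    GoodPair F T.obj₃ Y := by
  have hFT := F.map_distinguished T hT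
  have inj : ∀ φ : T.obj₃ ⟶ Y, F.map φ = 0 → φ = 0 := by
    intro φ hφ
    have h3 : T.mor₂ ≫ φ = 0 := by
      apply h₂.1
      dsimp
      rw [F.map_comp, hφ, comp_zero, F.map_zero]
    obtain ⟨ψ, rfl⟩ := Triangle.yoneda_exact₃ T hT φ h3
    have hχ : (F.map T.mor₃ ≫ (F.commShiftIso (1:ℤ)).hom.app T.obj₁) ≫
        ((F.commShiftIso (1:ℤ)).inv.app T.obj₁ ≫ F.map ψ) = 0 := by
      rw [Category.assoc, Iso.hom_inv_id_app_assoc, ← F.map_comp, hφ]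
    obtain ⟨χ', hχ'⟩ : ∃ χ' : (F.obj T.obj₂)⟦(1:ℤ)⟧ ⟶ F.obj Y,
        (F.commShiftIso (1:ℤ)).inv.app T.obj₁ ≫ F.map ψ = -(F.map T.mor₁)⟦(1:ℤ)⟧' ≫ χ' :=
      by
        obtain ⟨g, hg⟩ := Triangle.yoneda_exact₂ _
          (rot_of_distTriang _ (rot_of_distTriang _ hFT))
          ((F.commShiftIso (1:ℤ)).inv.app T.obj₁ ≫ F.map ψ) hχ
        refine ⟨g, hg.trans ?_⟩
        simp
        exact Preadditive.neg_comp _ _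
    obtain ⟨δ, hδ⟩ := h₂'.2 ((F.commShiftIso (1:ℤ)).hom.app T.obj₂ ≫ χ')
    dsimp at hδ
    have h6 : T.mor₁⟦(1:ℤ)⟧' ≫ δ = -ψ := by
      apply h₁'.1
      dsimp
      have nat := (F.commShiftIso (1:ℤ)).hom.naturality T.mor₁
      dsimp at nat
      rw [F.map_comp, hδ, ← Category.assoc, nat, Category.assoc, F.map_neg]
      have : (F.map T.mor₁)⟦(1:ℤ)⟧' ≫ χ' =
          -((F.commShiftIso (1:ℤ)).inv.app T.obj₁ ≫ F.map ψ) := by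
        rw [hχ']
        simp
      rw [this]
      simp
    have h7 : ψ = -(T.mor₁⟦(1:ℤ)⟧' ≫ δ) := by rw [h6, neg_neg]
    rw [h7, Preadditive.comp_neg, ← Category.assoc,
      comp_distTriang_mor_zero₃₁ T hT, zero_comp, neg_zero]
  constructor
  · intro φ φ' hφ
    dsimp at hφ
    have := inj (φ - φ') (by rw [F.map_sub, hφ, sub_self])
    rwa [sub_eq_zero] at this
  · intro g
    obtain ⟨β, hβ⟩ := h₂.2 (F.map T.mor₂ ≫ g)
    dsimp at hβ
    have h4 : T.mor₁ ≫ β = 0 := by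
      apply h₁.1
      dsimp
      rw [F.map_comp, hβ, ← Category.assoc, ← F.map_comp,
        comp_distTriang_mor_zero₁₂ T hT, F.map_zero, zero_comp, F.map_zero]
    obtain ⟨γ, hγ⟩ := Triangle.yoneda_exact₂ T hT β h4
    have h5 : F.map T.mor₂ ≫ (g - F.map γ) = 0 := by
      rw [Preadditive.comp_sub, ← hβ, hγ, F.map_comp, sub_self]
    obtain ⟨δ', hδ'⟩ : ∃ δ' : (F.obj T.obj₁)⟦(1:ℤ)⟧ ⟶ F.obj Y,
        g - F.map γ = (F.map T.mor₃ ≫ (F.commShiftIso (1:ℤ)).hom.app T.obj₁) ≫ δ' :=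
      Triangle.yoneda_exact₃ _ hFT (g - F.map γ) h5
    obtain ⟨ε, hε⟩ := h₁'.2 ((F.commShiftIso (1:ℤ)).hom.app T.obj₁ ≫ δ')
    dsimp at hε
    refine ⟨γ + T.mor₃ ≫ ε, ?_⟩
    dsimp
    rw [Category.assoc] at hδ'
    rw [F.map_add, F.map_comp, hε, ← hδ']
    abel

end Aux

variable (C : Type u) [Category.{v} C] [HasShift C ℤ] [Preadditive C] [HasZeroObject C]
  [∀ n : ℤ, (shiftFunctor C n).Additive] [Pretriangulated C]

/-- A class of objects `Q` of a (pre)triangulated category is *thick* if it is closed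
under isomorphisms, shifts (in both directions), cones of morphisms between its objects
(two-out-of-three in distinguished triangles), and direct summands. -/
def IsThickClass [HasBinaryBiproducts C] (Q : Set C) : Prop :=
  (∀ ⦃X Y : C⦄, (X ≅ Y) → X ∈ Q → Y ∈ Q) ∧
  (∀ (X : C) (n : ℤ), X ∈ Q → X⟦n⟧ ∈ Q) ∧
  (∀ T ∈ distTriang C, T.obj₁ ∈ Q → T.obj₂ ∈ Q → T.obj₃ ∈ Q) ∧
  (∀ X Y Z : C, Z ∈ Q → (Z ≅ X ⊞ Y) → X ∈ Q)

/-- `thick(U)`: the smallest thick class of objects containing `U`, i.e. the smallest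
full triangulated subcategory containing `U` and closed under isomorphisms and direct
summands. -/
def thickClosure [HasBinaryBiproducts C] (U : C) : Set C :=
  {X | ∀ Q : Set C, IsThickClass C Q → U ∈ Q → X ∈ Q}

/-- **Statement 19** (Lemma 8.3, dévissage): let `F : T → T'` be a triangulated functor
and `U` an object of `T` such that `F : Hom(U, U[n]) → Hom(FU, FU[n])` is bijective for
all `n ∈ ℤ`.  Then `F` is fully faithful on `thick(U)`. -/
theorem stmt_19 {C : Type u} [Category.{v} C] [HasShift C ℤ] [Preadditive C]
    [HasZeroObject C] [∀ n : ℤ, (shiftFunctor C n).Additive] [Pretriangulated C]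
    [HasBinaryBiproducts C]
    {D : Type u'} [Category.{v'} D] [HasShift D ℤ] [Preadditive D]
    [HasZeroObject D] [∀ n : ℤ, (shiftFunctor D n).Additive] [Pretriangulated D]
    (F : C ⥤ D) [F.CommShift ℤ] [F.IsTriangulated]
    (U : C)
    (hU : ∀ n : ℤ, Function.Bijective
      (fun φ : U ⟶ U⟦n⟧ => F.map φ ≫ (F.commShiftIso n).hom.app U)) :
    ∀ X ∈ thickClosure C U, ∀ Y ∈ thickClosure C U,
      Function.Bijective (fun φ : X ⟶ Y => F.map φ) := by
  intro X hX Y hY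
  have hU' : ∀ n : ℤ, GoodPair F U (U⟦n⟧) := by
    intro n
    have h := hU n
    constructor
    · intro φ φ' hφ
      replace hφ : F.map φ = F.map φ' := hφ
      apply h.1
      dsimp
      rw [hφ]
    · intro g
      obtain ⟨φ, hφ⟩ := h.2 (g ≫ (F.commShiftIso n).hom.app U)
      refine ⟨φ, ?_⟩
      replace hφ : F.map φ ≫ (F.commShiftIso n).hom.app U
          = g ≫ (F.commShiftIso n).hom.app U := hφ
      rwa [cancel_mono] at hφ
  have thick₁ : IsThickClass C {Y' | ∀ n : ℤ, GoodPair F U (Y'⟦n⟧)} := by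
    refine ⟨?_, ?_, ?_, ?_⟩
    · intro A B e hA n
      exact goodPair_iso_right F ((shiftFunctor C n).mapIso e) (hA n)
    · intro A m hA n
      exact goodPair_iso_right F ((shiftFunctorAdd C m n).app A) (hA (m + n))
    · intro T hT h1 h2 n
      have hTn : (Triangle.shiftFunctor C n).obj T ∈ distTriang C :=
        Triangle.shift_distinguished T hT n
      exact goodPair_five_snd F _ hTn U (h1 n) (h2 n)
        (goodPair_iso_right F ((shiftFunctorAdd C n 1).app T.obj₁) (h1 (n + 1)))
        (goodPair_iso_right F ((shiftFunctorAdd C n 1).app T.obj₂) (h2 (n + 1)))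
    · intro A B Z hZ e n
      haveI : PreservesBinaryBiproducts (shiftFunctor C n) :=
        preservesBinaryBiproducts_of_preservesBiproducts _
      have h1 : GoodPair F U ((A⟦n⟧) ⊞ (B⟦n⟧)) :=
        goodPair_iso_right F
          (((shiftFunctor C n).mapIso e).trans ((shiftFunctor C n).mapBiprod A B)) (hZ n)
      exact goodPair_summand_right F h1
  have hY' : ∀ n : ℤ, GoodPair F U (Y⟦n⟧) := hY _ thick₁ hU'
  have thick₂ : IsThickClass C {X' | ∀ n : ℤ, GoodPair F (X'⟦n⟧) Y} := by
    refine ⟨?_, ?_, ?_, ?_⟩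
    · intro A B e hA n
      exact goodPair_iso_left F ((shiftFunctor C n).mapIso e) (hA n)
    · intro A m hA n
      exact goodPair_iso_left F ((shiftFunctorAdd C m n).app A) (hA (m + n))
    · intro T hT h1 h2 n
      have hTn : (Triangle.shiftFunctor C n).obj T ∈ distTriang C :=
        Triangle.shift_distinguished T hT n
      exact goodPair_five_fst F _ hTn Y (h1 n) (h2 n)
        (goodPair_iso_left F ((shiftFunctorAdd C n 1).app T.obj₁) (h1 (n + 1)))
        (goodPair_iso_left F ((shiftFunctorAdd C n 1).app T.obj₂) (h2 (n + 1)))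
    · intro A B Z hZ e n
      haveI : PreservesBinaryBiproducts (shiftFunctor C n) :=
        preservesBinaryBiproducts_of_preservesBiproducts _
      have h1 : GoodPair F ((A⟦n⟧) ⊞ (B⟦n⟧)) Y :=
        goodPair_iso_left F
          (((shiftFunctor C n).mapIso e).trans ((shiftFunctor C n).mapBiprod A B)) (hZ n)
      exact goodPair_summand_left F h1
  have hUQ₂ : ∀ n : ℤ, GoodPair F (U⟦n⟧) Y := by
    intro n
    have h0 : GoodPair F U (Y⟦-n⟧) := hY' (-n)
    have h1 := goodPair_shift F n h0
    exact goodPair_iso_right F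
      (((shiftFunctorAdd' C (-n) n 0 (by ring)).app Y).symm ≪≫ (shiftFunctorZero C ℤ).app Y) h1
  have hX' : ∀ n : ℤ, GoodPair F (X⟦n⟧) Y := hX _ thick₂ hUQ₂
  exact goodPair_iso_left F ((shiftFunctorZero C ℤ).app X) (hX' 0)
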